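/- Let R be a p-torsion free perfectoid ring with ϖ as in the definition. Then every element of R is congruent modulo p^2 to an element of the form x^p + p y^p with x, y ∈ R; equivalently, modulo p ϖ every element of R is a p-th power. -/

import Mathlib

/-- The defining conditions on `ϖ` for a `p`-torsion free perfectoid ring:
`(ϖ^p) = (p)` and the map `R/ϖ → R/p`, `x ↦ x^p`, is bijective
(stated elementwise: surjectivity of `x ↦ x^p mod p` and the kernel condition). -/
def PerfectoidCond (p : ℕ) (R : Type*) [CommRing R] (ϖ : R) : Prop :=
  Ideal.span {ϖ ^ p} = Ideal.span {(p : R)} ∧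
  (∀ y : R, ∃ x : R, y - x ^ p ∈ Ideal.span {(p : R)}) ∧
  (∀ x : R, x ^ p ∈ Ideal.span {(p : R)} → x ∈ Ideal.span {ϖ})

/-- modulo p² every element of R is of the form x^p + p·y^p;
equivalently, modulo p·ϖ every element of R is a p-th power. -/
theorem stmt_7 {p : ℕ} (hp : p.Prime) (R : Type*) [CommRing R]
    (hnzd : (p : R) ∈ nonZeroDivisors R)
    (hc : IsAdicComplete (Ideal.span {(p : R)}) R)
    (ϖ : R) (hϖ : PerfectoidCond p R ϖ) :
    ∀ r : R,
      (∃ x y : R, r - (x ^ p + (p : R) * y ^ p) ∈ Ideal.span {(p : R) ^ 2}) ∧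
      (∃ x : R, r - x ^ p ∈ Ideal.span {(p : R) * ϖ}) := by
  intro r
  obtain ⟨hspan, hsurj, -⟩ := hϖ
  -- first part
  obtain ⟨x, hx⟩ := hsurj r
  rw [Ideal.mem_span_singleton] at hx
  obtain ⟨s, hs⟩ := hx
  obtain ⟨y, hy⟩ := hsurj s
  rw [Ideal.mem_span_singleton] at hy
  obtain ⟨t, ht⟩ := hy
  have hfst : r - (x ^ p + (p : R) * y ^ p) = (p : R) ^ 2 * t := by
    have : r = x ^ p + (p : R) * s := by linear_combination hs
    rw [this]
    ring_nf
    linear_combination (p : R) * ht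
  refine ⟨⟨x, y, Ideal.mem_span_singleton.2 ⟨t, hfst⟩⟩, ?_⟩
  -- second part
  have hpdvd : ϖ ^ p ∣ (p : R) := by
    rw [← Ideal.mem_span_singleton, hspan, Ideal.mem_span_singleton]
  obtain ⟨a, ha⟩ := hpdvd
  obtain ⟨c, hcm⟩ := hsurj a
  rw [Ideal.mem_span_singleton] at hcm
  obtain ⟨e, he⟩ := hcm
  refine ⟨x + c * ϖ * y, Ideal.mem_span_singleton.2 ?_⟩
  have hpow := add_pow_prime_eq' hp x (c * ϖ * y)
  have hp1 : 1 ≤ p := hp.one_lt.le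
  have hϖp : ϖ ^ p = ϖ * ϖ ^ (p - 1) := by
    rw [← pow_succ']; congr 1; omega
  have hS : ϖ ∣ ∑ k ∈ Finset.Ioo 0 p, x ^ k * (c * ϖ * y) ^ (p - k) * ↑(p.choose k / p) := by
    refine Finset.dvd_sum fun k hk => ?_
    rw [Finset.mem_Ioo] at hk
    have hck : (c * ϖ * y) ^ (p - k) = (c * ϖ * y) * (c * ϖ * y) ^ (p - k - 1) := by
      rw [← pow_succ']; congr 1; omega
    rw [hck]
    exact ⟨c * y * (c * ϖ * y) ^ (p - k - 1) * (x ^ k) * ↑(p.choose k / p), by ring⟩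
  obtain ⟨S, hSe⟩ := hS
  refine ⟨ϖ ^ (p - 1) * a * t + e * ϖ ^ (p - 1) * y ^ p - S, ?_⟩
  have hmp : (x + c * ϖ * y) ^ p
      = x ^ p + c ^ p * ϖ ^ p * y ^ p
        + (p : R) * ∑ k ∈ Finset.Ioo 0 p, x ^ k * (c * ϖ * y) ^ (p - k) * ↑(p.choose k / p) := by
    rw [hpow, mul_pow, mul_pow]
  linear_combination hfst - hmp - (p : R) * hSe
    + ((p : R) * a * t + (p : R) * e * y ^ p) * hϖp + (ϖ ^ p * y ^ p) * he
    + (y ^ p + (p : R) * t) * ha
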